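/- arXiv:1107.3852 — 2 statements merged into one kernel-verified Lean document; each statement's English description precedes it below -/
import Mathlib

section
/- For a positive integer j, the sequence C formally satisfies the recursion R(n) = R(n - R(n-j)) + R(n - 2j - R(n-3j)): for every integer n, C(n) = C(n - C(n-j)) + C(n - 2j - C(n-3j)). -/
def C (j : ℕ) (n : ℤ) : ℤ := ∑ i ∈ Finset.range j, ⌈((n : ℚ) - i) / (2 * j)⌉

lemma sum_ediv (k : ℕ) (hk : 0 < k) (a : ℤ) :
    ∑ i ∈ Finset.range k, (a + i) / (k : ℤ) = a := by
  have hk' : (k : ℤ) ≠ 0 := by exact_mod_cast hk.ne'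
  induction a using Int.induction_on with
  | zero =>
    rw [Finset.sum_congr rfl (fun i hi => ?_), Finset.sum_const, smul_zero]
    simp only [zero_add]
    exact Int.ediv_eq_zero_of_lt (Int.ofNat_nonneg i)
      (by exact_mod_cast Finset.mem_range.mp hi)
  | succ a ih =>
    have h0 := Finset.sum_range_succ (fun i : ℕ => ((a:ℤ) + i) / (k : ℤ)) k
    have h1 := Finset.sum_range_succ' (fun i : ℕ => ((a:ℤ) + i) / (k : ℤ)) k
    have hkk : ((a:ℤ) + k) / k = (a:ℤ)/k + 1 := by
      rw [← Int.add_mul_ediv_right (a:ℤ) 1 hk']; ring_nf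
    simp only [Nat.cast_zero, add_zero] at h1
    have hgoal : ∑ i ∈ Finset.range k, ((a:ℤ) + 1 + i) / (k : ℤ)
        = ∑ i ∈ Finset.range k, ((a:ℤ) + (i+1)) / (k : ℤ) := by
      apply Finset.sum_congr rfl; intro i _; congr 1; ring
    have hgoal2 : ∑ i ∈ Finset.range k, ((a:ℤ) + (i+1)) / (k : ℤ)
        = ∑ i ∈ Finset.range k, (fun i : ℕ => ((a:ℤ) + i) / (k : ℤ)) (i + 1) := by
      apply Finset.sum_congr rfl; intro i _; simp only []; congr 1 <;> push_cast <;> try ring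
    rw [hgoal, hgoal2]
    simp only [] at h0 h1 ⊢
    omega
  | pred a ih =>
    have h0 := Finset.sum_range_succ (fun i : ℕ => ((-a:ℤ) - 1 + i) / (k : ℤ)) k
    have h1 := Finset.sum_range_succ' (fun i : ℕ => ((-a:ℤ) - 1 + i) / (k : ℤ)) k
    have hkk : ((-a:ℤ) - 1 + k) / k = ((-a:ℤ) - 1)/k + 1 := by
      rw [← Int.add_mul_ediv_right ((-a:ℤ) - 1) 1 hk']; ring_nf
    simp only [Nat.cast_zero, add_zero] at h1
    have h2 : ∑ i ∈ Finset.range k, (fun i : ℕ => ((-a:ℤ) - 1 + i) / (k : ℤ)) (i + 1)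
        = ∑ i ∈ Finset.range k, ((-a:ℤ) + i) / (k : ℤ) := by
      apply Finset.sum_congr rfl; intro i _; simp only []; congr 1; push_cast; ring
    simp only [] at h0 h1 h2 ⊢
    rw [h2] at h1
    omega

lemma C_term (j : ℕ) (m : ℤ) (i : ℕ) :
    ⌈((m : ℚ) - i) / (2 * j)⌉ = -((((i : ℤ) - m)) / ((2 * j : ℕ) : ℤ)) := by
  have h : ((m : ℚ) - i) / (2 * j) = -(((((i:ℤ) - m : ℤ)) : ℚ) / ((2 * j : ℕ) : ℚ)) := by
    push_cast
    rcases eq_or_ne (j : ℚ) 0 with h | h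
    · rw [h]; simp
    · field_simp; ring
  rw [h, Int.ceil_neg, Rat.floor_intCast_div_natCast]

lemma C_eq (j : ℕ) (m : ℤ) :
    C j m = ∑ i ∈ Finset.range j, -(((i : ℤ) - m) / ((2 * j : ℕ) : ℤ)) := by
  unfold C
  exact Finset.sum_congr rfl fun i _ => C_term j m i

lemma key (j : ℕ) (hj : 0 < j) (m : ℤ) : C j m + C j (m - j) = m := by
  rw [C_eq, C_eq]
  have h2 : ∑ i ∈ Finset.range j, -(((i : ℤ) - (m - j)) / ((2 * j : ℕ) : ℤ))
      = ∑ i ∈ Finset.range j,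
          (fun i : ℕ => -(((i : ℤ) - m) / ((2 * j : ℕ) : ℤ))) (j + i) := by
    apply Finset.sum_congr rfl
    intro i _
    simp only []
    congr 2
    push_cast
    ring
  rw [h2, ← Finset.sum_range_add (fun i : ℕ => -(((i : ℤ) - m) / ((2 * j : ℕ) : ℤ))) j j]
  have h3 : ∑ i ∈ Finset.range (j + j), -(((i : ℤ) - m) / ((2 * j : ℕ) : ℤ))
      = -∑ i ∈ Finset.range (j + j), ((-m + i) / ((j + j : ℕ) : ℤ)) := by
    rw [← Finset.sum_neg_distrib]
    apply Finset.sum_congr rfl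
    intro i _
    congr 2
    · ring
    · push_cast; ring
  rw [h3, sum_ediv (j + j) (by omega) (-m)]
  ring

theorem stmt7 (j : ℕ) (hj : 0 < j) (n : ℤ) :
    C j n = C j (n - C j (n - j)) + C j (n - 2 * j - C j (n - 3 * j)) := by
  have k1 := key j hj n
  have k2 := key j hj (n - j)
  have k4 := key j hj (C j n)
  have e2 : n - j - j = n - 2 * j := by ring
  rw [e2] at k2
  have k3 := key j hj (n - 2 * j)
  have e3 : n - 2 * j - j = n - 3 * j := by ring
  rw [e3] at k3
  have e1 : n - C j (n - j) = C j n := by omega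
  have e4 : n - 2 * j - C j (n - 3 * j) = C j n - j := by omega
  rw [e1, e4]
  omega
end

section
/- Let j be a positive integer and let s_1, a_1, s_2, a_2, e be integers. Then for all integers n, C(n - s_1 - C(n - a_1)) + C(n - s_2 - C(n - a_2)) = C(n - (s_1 - 2ej) - C(n - a_1)) + C(n - (s_2 + 2ej) - C(n - a_2)). (Transformation (c) preserves the difference function.) -/
lemma C_shift (j : ℕ) (hj : 0 < j) (m e : ℤ) :
    C j (m + 2 * e * j) = C j m + e * j := by
  unfold C
  have hj' : (2 * (j : ℚ)) ≠ 0 := by positivity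
  have : ∀ i ∈ Finset.range j,
      ⌈(((m + 2 * e * j : ℤ) : ℚ) - i) / (2 * j)⌉ = ⌈((m : ℚ) - i) / (2 * j)⌉ + e := by
    intro i _
    have : (((m + 2 * e * j : ℤ) : ℚ) - i) / (2 * j) = ((m : ℚ) - i) / (2 * j) + e := by
      push_cast
      field_simp
      ring
    rw [this, Int.ceil_add_intCast]
  rw [Finset.sum_congr rfl this, Finset.sum_add_distrib, Finset.sum_const,
    Finset.card_range, nsmul_eq_mul]
  ring

theorem stmt12 (j : ℕ) (hj : 0 < j) (s₁ a₁ s₂ a₂ e : ℤ) (n : ℤ) :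
    C j (n - s₁ - C j (n - a₁)) + C j (n - s₂ - C j (n - a₂)) =
      C j (n - (s₁ - 2 * e * j) - C j (n - a₁)) +
        C j (n - (s₂ + 2 * e * j) - C j (n - a₂)) := by
  have h1 : n - (s₁ - 2 * e * j) - C j (n - a₁)
      = (n - s₁ - C j (n - a₁)) + 2 * e * j := by ring
  have h2 : n - (s₂ + 2 * e * j) - C j (n - a₂)
      = (n - s₂ - C j (n - a₂)) + 2 * (-e) * j := by ring
  rw [h1, h2, C_shift j hj _ e, C_shift j hj _ (-e)]
  ring
end
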